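/- arXiv:1803.05690 — 4 statements merged into one kernel-verified Lean document; each statement's English description precedes it below -/
import Mathlib

section
/- Small-jump term bound in the Lyapunov computation: Let z > 1 be real, q ≥ 1, k ≥ 1 and C ≥ 0 natural numbers, and λ⁺, λ⁻ ≥ 0 reals. Then λ⁺·(z^{max(q+k−C,0)} − z^{max(q−C,0)}) + λ⁻·(z^{max(q−k−C,0)} − z^{max(q−C,0)}) ≤ λ⁺·𝟙_{q ≤ C+k}·(z^{2k} − 1) + 𝟙_{q > C+k}·(z^{k} − 1)·z^{max(q−C,0)}·(λ⁺ − λ⁻·z^{−k}), where the differences q+k−C, q−C, q−k−C are computed in the integers and 𝟙 denotes an indicator. -/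
/-- Small-jump term bound in the Lyapunov computation: the contribution of
insertion and consumption jumps of size `k` to the generator applied to the
geometric test function `x ↦ z ^ max (x - C) 0` (differences computed in `ℤ`). -/
theorem small_jump_bound (z : ℝ) (hz : 1 < z) (q k C : ℕ) (hq : 1 ≤ q) (hk : 1 ≤ k)
    (lp lm : ℝ) (hlp : 0 ≤ lp) (hlm : 0 ≤ lm) :
    lp * (z ^ max ((q : ℤ) + k - C) 0 - z ^ max ((q : ℤ) - C) 0)
      + lm * (z ^ max ((q : ℤ) - k - C) 0 - z ^ max ((q : ℤ) - C) 0)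
    ≤ lp * (if q ≤ C + k then (1 : ℝ) else 0) * (z ^ (2 * k) - 1)
      + (if C + k < q then (1 : ℝ) else 0) * (z ^ k - 1) * z ^ max ((q : ℤ) - C) 0
          * (lp - lm * z⁻¹ ^ k) := by
  have hz0 : (0:ℝ) < z := lt_trans one_pos hz
  by_cases h : q ≤ C + k
  · rw [if_pos h, if_neg (not_lt.mpr h)]
    have hD : z ^ max ((q:ℤ) - k - C) 0 ≤ z ^ max ((q:ℤ) - C) 0 :=
      zpow_le_zpow_right₀ hz.le (max_le_max (by omega) le_rfl)
    have hA : z ^ max ((q:ℤ) + k - C) 0 ≤ z ^ (2*k) := by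
      rw [← zpow_natCast]
      exact zpow_le_zpow_right₀ hz.le (by push_cast; omega)
    have hB : (1:ℝ) ≤ z ^ max ((q:ℤ) - C) 0 :=
      one_le_zpow₀ hz.le (le_max_right _ _)
    nlinarith [mul_le_mul_of_nonneg_left (sub_le_sub hA hB) hlp,
      mul_le_mul_of_nonneg_left (sub_nonneg.mpr hD) hlm]
  · rw [if_neg h, if_pos (not_le.mp h)]
    push_neg at h
    have h1 : max ((q:ℤ) + k - C) 0 = ((q:ℤ) - C) + k := by omega
    have h2 : max ((q:ℤ) - k - C) 0 = ((q:ℤ) - C) + (-(k:ℤ)) := by omega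
    have h3 : max ((q:ℤ) - C) 0 = (q:ℤ) - C := by omega
    rw [h1, h2, h3, zpow_add₀ hz0.ne', zpow_add₀ hz0.ne', zpow_natCast,
      zpow_neg, zpow_natCast, ← inv_pow]
    have hzk : z⁻¹ ^ k * z ^ k = 1 := by
      rw [inv_pow]; field_simp
    refine le_of_eq ?_
    linear_combination (z ^ ((q:ℤ) - C) * lm) * hzk
end

section
/- Transfer of the negative drift condition to smaller geometric rates: Let (aₙ)_{n≥0} and (bₙ)_{n≥0} be nonnegative real sequences, z₀ > 1 and δ > 0, and assume Σₙ aₙ z₀ⁿ < ∞, Σₙ bₙ < ∞, and Σₙ (z₀ⁿ − 1)(aₙ − bₙ z₀^{−n}) ≤ −δ. Then for every z with 1 < z ≤ z₀: Σₙ (zⁿ − 1)(aₙ − bₙ z^{−n}) ≤ −δ·(z − 1)/(z₀ − 1). -/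
section aux

private lemma drift_key (x : ℝ) (hx : 0 < x) (n : ℕ) (A B : ℝ) :
    (x ^ n - 1) * (A - B * x⁻¹ ^ n) = A * (x ^ n - 1) - B * (1 - x⁻¹ ^ n) := by
  have hxn : x ^ n * x⁻¹ ^ n = 1 := by
    rw [← mul_pow, mul_inv_cancel₀ hx.ne', one_pow]
  linear_combination (-B) * hxn

private lemma drift_inv_id (x : ℝ) (hx : 0 < x) (n : ℕ) :
    1 - x⁻¹ ^ n = (x - 1) * ∑ i ∈ Finset.range n, x⁻¹ ^ (i + 1) := by
  have h1 : (∑ i ∈ Finset.range n, x⁻¹ ^ (i + 1))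
      = x⁻¹ * ∑ i ∈ Finset.range n, x⁻¹ ^ i := by
    rw [Finset.mul_sum]
    exact Finset.sum_congr rfl fun i _ => by rw [pow_succ']
  have h2 := geom_sum_mul x⁻¹ n
  have hxi : x * x⁻¹ = 1 := mul_inv_cancel₀ hx.ne'
  rw [h1]
  linear_combination h2 - (∑ i ∈ Finset.range n, x⁻¹ ^ i) * hxi

private lemma drift_geom_id (x : ℝ) (n : ℕ) :
    x ^ n - 1 = (x - 1) * ∑ i ∈ Finset.range n, x ^ i := by
  linarith [geom_sum_mul x n]

end aux

/-- Transfer of the negative drift condition to smaller geometric rates. -/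
theorem drift_transfer (a b : ℕ → ℝ) (ha : ∀ n, 0 ≤ a n) (hb : ∀ n, 0 ≤ b n)
    (z₀ δ : ℝ) (hz₀ : 1 < z₀) (hδ : 0 < δ)
    (hsa : Summable (fun n => a n * z₀ ^ n)) (hsb : Summable b)
    (hdrift : ∑' n : ℕ, (z₀ ^ n - 1) * (a n - b n * z₀⁻¹ ^ n) ≤ -δ) :
    ∀ z : ℝ, 1 < z → z ≤ z₀ →
      ∑' n : ℕ, (z ^ n - 1) * (a n - b n * z⁻¹ ^ n) ≤ -δ * (z - 1) / (z₀ - 1) := by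
  intro z hz hzz₀
  have hz0 : (0:ℝ) < z := lt_trans one_pos hz
  have hz₀0 : (0:ℝ) < z₀ := lt_trans one_pos hz₀
  have hz₀1 : z₀ - 1 ≠ 0 := by linarith
  set c : ℝ := (z - 1) / (z₀ - 1) with hc
  have hcpos : 0 < c := div_pos (by linarith) (by linarith)
  -- summability pieces
  have hsa' : ∀ w : ℝ, 0 < w → w ≤ z₀ → Summable (fun n => a n * (w ^ n - 1)) := by
    intro w hw hwz
    have h1 : Summable (fun n => a n * w ^ n) := by
      apply hsa.of_nonneg_of_le
      · intro n; exact mul_nonneg (ha n) (pow_nonneg hw.le n)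
      · intro n
        exact mul_le_mul_of_nonneg_left (pow_le_pow_left₀ hw.le hwz n) (ha n)
    have h2 : Summable a := by
      apply hsa.of_nonneg_of_le ha
      intro n
      nlinarith [ha n, (one_le_pow₀ hz₀.le : 1 ≤ z₀ ^ n)]
    simpa [mul_sub] using h1.sub h2
  have hsb' : ∀ w : ℝ, 1 < w → Summable (fun n => b n * (1 - w⁻¹ ^ n)) := by
    intro w hw
    have hw0 : (0:ℝ) < w := lt_trans one_pos hw
    have hwi : (0:ℝ) ≤ w⁻¹ := by positivity
    have hwi1 : w⁻¹ ≤ 1 := inv_le_one_of_one_le₀ hw.le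
    apply hsb.of_nonneg_of_le
    · intro n
      have h1 : w⁻¹ ^ n ≤ 1 := pow_le_one₀ hwi hwi1
      nlinarith [hb n]
    · intro n
      have h2 : (0:ℝ) ≤ w⁻¹ ^ n := pow_nonneg hwi n
      nlinarith [hb n]
  have hS : ∀ w : ℝ, 1 < w → w ≤ z₀ →
      Summable (fun n => a n * (w ^ n - 1) - b n * (1 - w⁻¹ ^ n)) := by
    intro w hw hwz
    exact (hsa' w (lt_trans one_pos hw) hwz).sub (hsb' w hw)
  -- pointwise inequalities
  have hpow1 : ∀ n, z ^ n - 1 ≤ c * (z₀ ^ n - 1) := by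
    intro n
    have he : c * (z₀ ^ n - 1) = (z - 1) * ∑ i ∈ Finset.range n, z₀ ^ i := by
      rw [drift_geom_id z₀ n, hc]
      field_simp
    rw [he, drift_geom_id z n]
    apply mul_le_mul_of_nonneg_left _ (by linarith : (0:ℝ) ≤ z - 1)
    exact Finset.sum_le_sum fun i _ => pow_le_pow_left₀ hz0.le hzz₀ i
  have hpow2 : ∀ n, c * (1 - z₀⁻¹ ^ n) ≤ 1 - z⁻¹ ^ n := by
    intro n
    have he : c * (1 - z₀⁻¹ ^ n) = (z - 1) * ∑ i ∈ Finset.range n, z₀⁻¹ ^ (i + 1) := by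
      rw [drift_inv_id z₀ hz₀0 n, hc]
      field_simp
    rw [he, drift_inv_id z hz0 n]
    apply mul_le_mul_of_nonneg_left _ (by linarith : (0:ℝ) ≤ z - 1)
    apply Finset.sum_le_sum
    intro i _
    exact pow_le_pow_left₀ (by positivity) (inv_anti₀ hz0 hzz₀) _
  have hpoint : ∀ n, a n * (z ^ n - 1) - b n * (1 - z⁻¹ ^ n)
      ≤ c * (a n * (z₀ ^ n - 1) - b n * (1 - z₀⁻¹ ^ n)) := by
    intro n
    have h1 : a n * (z ^ n - 1) ≤ a n * (c * (z₀ ^ n - 1)) :=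
      mul_le_mul_of_nonneg_left (hpow1 n) (ha n)
    have h2 : b n * (c * (1 - z₀⁻¹ ^ n)) ≤ b n * (1 - z⁻¹ ^ n) :=
      mul_le_mul_of_nonneg_left (hpow2 n) (hb n)
    nlinarith
  -- rewrite the tsums
  have hrw : ∀ w : ℝ, 0 < w →
      (∑' n : ℕ, (w ^ n - 1) * (a n - b n * w⁻¹ ^ n))
        = ∑' n : ℕ, (a n * (w ^ n - 1) - b n * (1 - w⁻¹ ^ n)) :=
    fun w hw => tsum_congr fun n => drift_key w hw n (a n) (b n)
  rw [hrw z hz0]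
  rw [hrw z₀ hz₀0] at hdrift
  have hSz := hS z hz hzz₀
  have hSz₀ := hS z₀ hz₀ le_rfl
  calc (∑' n : ℕ, (a n * (z ^ n - 1) - b n * (1 - z⁻¹ ^ n)))
      ≤ ∑' n : ℕ, c * (a n * (z₀ ^ n - 1) - b n * (1 - z₀⁻¹ ^ n)) :=
        Summable.tsum_le_tsum hpoint hSz (hSz₀.mul_left c)
    _ = c * ∑' n : ℕ, (a n * (z₀ ^ n - 1) - b n * (1 - z₀⁻¹ ^ n)) := tsum_mul_left
    _ ≤ c * (-δ) := mul_le_mul_of_nonneg_left hdrift hcpos.le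
    _ = -δ * (z - 1) / (z₀ - 1) := by rw [hc]; ring
end

section
/- Inverse Hölder inequality for −x log x: Let φ : [0, e^{−1}] → [0, e^{−1}] be defined by φ(x) = −x·log x (with φ(0) = 0); φ is a strictly increasing continuous bijection of [0, e^{−1}] onto itself, and for every p > 1 there exists a constant R > 0 such that its inverse s¹ = φ^{−1} satisfies |a − b|^p ≤ R·|s¹(a) − s¹(b)| for all a, b ∈ [0, e^{−1}]. -/
open Real Set

private lemma negMulLog_strictMonoOn :
    StrictMonoOn Real.negMulLog (Set.Icc 0 (Real.exp (-1))) := by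
  apply strictMonoOn_of_deriv_pos (convex_Icc _ _)
    Real.continuous_negMulLog.continuousOn
  intro x hx
  rw [interior_Icc] at hx
  rw [Real.deriv_negMulLog (ne_of_gt hx.1)]
  have : Real.log x < Real.log (Real.exp (-1)) := Real.log_lt_log hx.1 hx.2
  rw [Real.log_exp] at this
  linarith

private lemma negMulLog_subadd {x d : ℝ} (hx : 0 ≤ x) (hd : 0 ≤ d) :
    Real.negMulLog (x + d) ≤ Real.negMulLog x + Real.negMulLog d := by
  rcases eq_or_lt_of_le hx with rfl | hx
  · simp
  rcases eq_or_lt_of_le hd with rfl | hd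
  · simp
  simp only [Real.negMulLog, neg_mul]
  have h1 : x * Real.log x ≤ x * Real.log (x + d) :=
    mul_le_mul_of_nonneg_left (Real.log_le_log hx (by linarith)) (le_of_lt hx)
  have h2 : d * Real.log d ≤ d * Real.log (x + d) :=
    mul_le_mul_of_nonneg_left (Real.log_le_log hd (by linarith)) (le_of_lt hd)
  nlinarith [h1, h2]

private lemma negMulLog_rpow_bound {p t : ℝ} (hp : 1 < p) (ht : 0 ≤ t)
    (hte : t ≤ Real.exp (-1)) :
    (Real.negMulLog t) ^ p ≤ (p / (p - 1)) ^ p * t := by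
  have hp0 : (0 : ℝ) < p := by linarith
  have hR : (0 : ℝ) < (p / (p - 1)) ^ p :=
    Real.rpow_pos_of_pos (div_pos hp0 (by linarith)) p
  rcases eq_or_lt_of_le ht with rfl | ht
  · simp [Real.zero_rpow (ne_of_gt hp0)]
  set ε : ℝ := (p - 1) / p with hεdef
  have hε : 0 < ε := div_pos (by linarith) hp0
  have hlognn : 0 ≤ -Real.log t := by
    have : Real.log t ≤ Real.log (Real.exp (-1)) := Real.log_le_log ht hte
    rw [Real.log_exp] at this; linarith
  have hlog : -Real.log t ≤ ε⁻¹ * t ^ (-ε) := by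
    have h1 : Real.log (t ^ (-ε)) ≤ t ^ (-ε) - 1 :=
      Real.log_le_sub_one_of_pos (Real.rpow_pos_of_pos ht _)
    rw [Real.log_rpow ht] at h1
    have h2 : ε * (-Real.log t) ≤ t ^ (-ε) := by nlinarith
    calc -Real.log t = ε⁻¹ * (ε * (-Real.log t)) := by
          rw [← mul_assoc, inv_mul_cancel₀ (ne_of_gt hε), one_mul]
      _ ≤ ε⁻¹ * t ^ (-ε) := mul_le_mul_of_nonneg_left h2 (le_of_lt (inv_pos.2 hε))
  have hval : Real.negMulLog t = t * (-Real.log t) := by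
    simp [Real.negMulLog]
  calc (Real.negMulLog t) ^ p = t ^ p * (-Real.log t) ^ p := by
        rw [hval, Real.mul_rpow (le_of_lt ht) hlognn]
    _ ≤ t ^ p * (ε⁻¹ * t ^ (-ε)) ^ p := by
        apply mul_le_mul_of_nonneg_left _ (Real.rpow_nonneg (le_of_lt ht) p)
        exact Real.rpow_le_rpow hlognn hlog (le_of_lt hp0)
    _ = ε⁻¹ ^ p * (t ^ p * t ^ (-ε * p)) := by
        rw [Real.mul_rpow (le_of_lt (inv_pos.2 hε)) (le_of_lt (Real.rpow_pos_of_pos ht _)),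
          ← Real.rpow_mul (le_of_lt ht)]
        ring
    _ = (p / (p - 1)) ^ p * t := by
        have hep : -ε * p = 1 - p := by rw [hεdef]; field_simp; ring
        have hinv : ε⁻¹ = p / (p - 1) := by rw [hεdef, inv_div]
        rw [hep, ← Real.rpow_add ht, hinv]
        norm_num

/-- Inverse Hölder inequality for `φ x = -x log x` on `[0, e⁻¹]`: `φ` is a
strictly increasing continuous bijection of `[0, e⁻¹]` onto itself, and for
every `p > 1` there is `R > 0` such that the inverse `s¹ = φ⁻¹` satisfies
`|a - b| ^ p ≤ R * |s¹ a - s¹ b|` for all `a, b ∈ [0, e⁻¹]` (stated via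
`a = φ x`, `b = φ y`). -/
theorem inverse_holder_neg_mul_log (φ : ℝ → ℝ)
    (hφ : ∀ x, φ x = -x * Real.log x) :
    StrictMonoOn φ (Set.Icc 0 (Real.exp (-1))) ∧
    ContinuousOn φ (Set.Icc 0 (Real.exp (-1))) ∧
    Set.BijOn φ (Set.Icc 0 (Real.exp (-1))) (Set.Icc 0 (Real.exp (-1))) ∧
    ∀ p : ℝ, 1 < p → ∃ R : ℝ, 0 < R ∧
      ∀ x ∈ Set.Icc (0 : ℝ) (Real.exp (-1)), ∀ y ∈ Set.Icc (0 : ℝ) (Real.exp (-1)),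
        |φ x - φ y| ^ p ≤ R * |x - y| := by
  have hφeq : φ = Real.negMulLog := funext fun x => (hφ x).trans rfl
  subst hφeq
  have hmem : Real.exp (-1) ∈ Set.Icc 0 (Real.exp (-1)) :=
    ⟨le_of_lt (Real.exp_pos _), le_refl _⟩
  have h0mem : (0 : ℝ) ∈ Set.Icc 0 (Real.exp (-1)) :=
    ⟨le_refl _, le_of_lt (Real.exp_pos _)⟩
  have hval : Real.negMulLog (Real.exp (-1)) = Real.exp (-1) := by
    simp [Real.negMulLog, Real.log_exp]
  have hexp1 : Real.exp (-1) ≤ 1 := by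
    calc Real.exp (-1) ≤ Real.exp 0 := Real.exp_le_exp.2 (by norm_num)
      _ = 1 := Real.exp_zero
  have hmono := negMulLog_strictMonoOn
  have hmapsto : Set.MapsTo Real.negMulLog (Set.Icc 0 (Real.exp (-1)))
      (Set.Icc 0 (Real.exp (-1))) := by
    intro t ⟨ht0, ht1⟩
    refine ⟨Real.negMulLog_nonneg ht0 (ht1.trans hexp1), ?_⟩
    calc Real.negMulLog t ≤ Real.negMulLog (Real.exp (-1)) :=
          hmono.monotoneOn ⟨ht0, ht1⟩ hmem ht1
      _ = Real.exp (-1) := hval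
  refine ⟨hmono, Real.continuous_negMulLog.continuousOn, ⟨hmapsto, hmono.injOn, ?_⟩, ?_⟩
  · -- surjOn
    intro a ha
    have := intermediate_value_Icc (le_of_lt (Real.exp_pos (-1)))
      Real.continuous_negMulLog.continuousOn
    apply this
    rwa [Real.negMulLog_zero, hval]
  · intro p hp
    refine ⟨(p / (p - 1)) ^ p,
      Real.rpow_pos_of_pos (div_pos (by linarith) (by linarith)) p, ?_⟩
    have key : ∀ x ∈ Set.Icc (0 : ℝ) (Real.exp (-1)),
        ∀ y ∈ Set.Icc (0 : ℝ) (Real.exp (-1)), x ≤ y →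
        |Real.negMulLog x - Real.negMulLog y| ^ p ≤ (p / (p - 1)) ^ p * |x - y| := by
      intro x hx y hy hxy
      have hmle : Real.negMulLog x ≤ Real.negMulLog y := hmono.monotoneOn hx hy hxy
      have habs : |Real.negMulLog x - Real.negMulLog y|
          = Real.negMulLog y - Real.negMulLog x := by
        rw [abs_sub_comm, abs_of_nonneg (by linarith)]
      have hsub : Real.negMulLog y - Real.negMulLog x ≤ Real.negMulLog (y - x) := by
        have := negMulLog_subadd hx.1 (sub_nonneg.2 hxy)
        have hxy' : x + (y - x) = y := by ring
        rw [hxy'] at this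
        linarith
      have hd0 : 0 ≤ y - x := sub_nonneg.2 hxy
      have hde : y - x ≤ Real.exp (-1) := by
        have := hy.2; have := hx.1; linarith
      have hnn : 0 ≤ Real.negMulLog y - Real.negMulLog x := by linarith
      calc |Real.negMulLog x - Real.negMulLog y| ^ p
          = (Real.negMulLog y - Real.negMulLog x) ^ p := by rw [habs]
        _ ≤ (Real.negMulLog (y - x)) ^ p := Real.rpow_le_rpow hnn hsub (by linarith)
        _ ≤ (p / (p - 1)) ^ p * (y - x) := negMulLog_rpow_bound hp hd0 hde
        _ = (p / (p - 1)) ^ p * |x - y| := by rw [abs_sub_comm, abs_of_nonneg hd0]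
    intro x hx y hy
    rcases le_total x y with h | h
    · exact key x hx y hy h
    · rw [abs_sub_comm, abs_sub_comm x y]
      exact key y hy x hx h
end

section
/- Invertibility of a weakly chained sub-generator matrix: Let M be an n×n real matrix such that M_{i,j} ≥ 0 for all i ≠ j and the row sums r_i = Σ_j M_{i,j} satisfy r_i ≤ 0 for every i. Assume moreover that for every index i there exists a finite sequence i = i₀, i₁, …, i_m such that M_{i_t, i_{t+1}} > 0 for each t < m and r_{i_m} < 0. Then M is invertible. -/
/-- Invertibility of a weakly chained sub-generator matrix: a real square matrix
with nonnegative off-diagonal entries and nonpositive row sums, in which every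
index is connected through entries `> 0` to an index with strictly negative row
sum, is invertible. -/
theorem weakly_chained_subgenerator_invertible (n : ℕ)
    (M : Matrix (Fin n) (Fin n) ℝ)
    (hoff : ∀ i j : Fin n, i ≠ j → 0 ≤ M i j)
    (hrow : ∀ i : Fin n, ∑ j, M i j ≤ 0)
    (hchain : ∀ i : Fin n, ∃ m : ℕ, ∃ p : ℕ → Fin n, p 0 = i ∧
      (∀ t < m, 0 < M (p t) (p (t + 1))) ∧ ∑ j, M (p m) j < 0) :
    IsUnit M := by
  rw [Matrix.isUnit_iff_isUnit_det, isUnit_iff_ne_zero]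
  intro hdet
  obtain ⟨v, hv, hMv⟩ := Matrix.exists_mulVec_eq_zero_iff.mpr hdet
  -- the diagonal is nonpositive
  have hdiag : ∀ i : Fin n, M i i ≤ 0 := by
    intro i
    have h1 : M i i + ∑ j ∈ Finset.univ.erase i, M i j = ∑ j, M i j :=
      Finset.add_sum_erase _ _ (Finset.mem_univ i)
    have h2 : (0:ℝ) ≤ ∑ j ∈ Finset.univ.erase i, M i j :=
      Finset.sum_nonneg fun j hj => hoff i j (Finset.ne_of_mem_erase hj).symm
    linarith [hrow i]
  obtain ⟨k, hk⟩ : ∃ k, v k ≠ 0 := Function.ne_iff.mp hv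
  obtain ⟨i₀, -, hi₀⟩ := Finset.exists_max_image Finset.univ (fun i => |v i|)
    ⟨k, Finset.mem_univ k⟩
  set c := |v i₀| with hc
  have hcpos : 0 < c := lt_of_lt_of_le (abs_pos.mpr hk) (hi₀ k (Finset.mem_univ k))
  have hvle : ∀ j, |v j| ≤ c := fun j => hi₀ j (Finset.mem_univ j)
  -- key step: at any index attaining the max modulus, the row sum vanishes and
  -- the max modulus propagates through positive entries
  have key : ∀ i : Fin n, |v i| = c →
      (∀ j, 0 < M i j → |v j| = c) ∧ ∑ j, M i j = 0 := by
    intro i hi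
    have hmv : ∑ j, M i j * v j = 0 := by
      have h := congrFun hMv i
      simpa [Matrix.mulVec, dotProduct] using h
    set S := Finset.univ.erase i with hS
    have hsplit : M i i * v i + ∑ j ∈ S, M i j * v j = ∑ j, M i j * v j :=
      Finset.add_sum_erase _ (fun j => M i j * v j) (Finset.mem_univ i)
    have hne : ∀ j ∈ S, i ≠ j := fun j hj => (Finset.ne_of_mem_erase hj).symm
    have hA : |∑ j ∈ S, M i j * v j| ≤ ∑ j ∈ S, M i j * |v j| := by
      refine (Finset.abs_sum_le_sum_abs _ _).trans (le_of_eq ?_)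
      exact Finset.sum_congr rfl fun j hj => by
        rw [abs_mul, abs_of_nonneg (hoff i j (hne j hj))]
    have hAB : ∑ j ∈ S, M i j * |v j| ≤ ∑ j ∈ S, M i j * c :=
      Finset.sum_le_sum fun j hj =>
        mul_le_mul_of_nonneg_left (hvle j) (hoff i j (hne j hj))
    have hsplit' : M i i + ∑ j ∈ S, M i j = ∑ j, M i j :=
      Finset.add_sum_erase _ _ (Finset.mem_univ i)
    have hrowS : ∑ j ∈ S, M i j ≤ -M i i := by linarith [hrow i]
    have hBC : ∑ j ∈ S, M i j * c ≤ (-M i i) * c := by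
      rw [← Finset.sum_mul]
      exact mul_le_mul_of_nonneg_right hrowS hcpos.le
    have hleft : (-M i i) * c = |∑ j ∈ S, M i j * v j| := by
      have hmx : M i i * v i = -∑ j ∈ S, M i j * v j := by linarith [hmv]
      calc (-M i i) * c = |M i i| * |v i| := by rw [abs_of_nonpos (hdiag i), hi]
        _ = |M i i * v i| := (abs_mul _ _).symm
        _ = |∑ j ∈ S, M i j * v j| := by rw [hmx, abs_neg]
    have heq1 : ∑ j ∈ S, M i j * |v j| = ∑ j ∈ S, M i j * c :=
      le_antisymm hAB (by linarith)
    have heq2 : ∑ j ∈ S, M i j * c = (-M i i) * c := le_antisymm hBC (by linarith)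
    constructor
    · intro j hj
      by_cases hij : j = i
      · exact absurd hj (by rw [hij]; exact not_lt.mpr (hdiag i))
      · have hjS : j ∈ S := Finset.mem_erase.mpr ⟨hij, Finset.mem_univ j⟩
        have hzero : ∑ j ∈ S, M i j * (c - |v j|) = 0 := by
          have : ∑ j ∈ S, M i j * (c - |v j|)
              = ∑ j ∈ S, M i j * c - ∑ j ∈ S, M i j * |v j| := by
            rw [← Finset.sum_sub_distrib]
            exact Finset.sum_congr rfl fun j _ => by ring
          rw [this, heq1, sub_self]
        have hterm := (Finset.sum_eq_zero_iff_of_nonneg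
          (fun j hjm => mul_nonneg (hoff i j (hne j hjm))
            (sub_nonneg.mpr (hvle j)))).mp hzero j hjS
        have : c - |v j| = 0 := by
          rcases mul_eq_zero.mp hterm with h | h
          · exact absurd h hj.ne'
          · exact h
        linarith
    · have : (∑ j, M i j) * c = 0 := by
        rw [← hsplit', add_mul]
        have heq2' : (∑ j ∈ S, M i j) * c = -M i i * c := by
          rw [Finset.sum_mul]; exact heq2
        linarith
      exact (mul_eq_zero.mp this).resolve_right hcpos.ne'
  obtain ⟨m, p, hp0, hstep, hneg⟩ := hchain i₀
  have hmaxt : ∀ t, t ≤ m → |v (p t)| = c := by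
    intro t
    induction t with
    | zero => intro _; rw [hp0]
    | succ t ih =>
      intro ht
      exact (key (p t) (ih (Nat.le_of_succ_le ht))).1 _
        (hstep t (Nat.lt_of_succ_le ht))
  have := (key (p m) (hmaxt m le_rfl)).2
  linarith
end
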